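/- For every natural number n, the real algebraic number 2·cos(π/3 + π/2ⁿ) has degree 2ⁿ over ℚ; that is, the minimal polynomial of 2·cos(π/3 + π/2ⁿ) over ℚ has degree 2ⁿ (equivalently, [ℚ(2·cos(π/3 + π/2ⁿ)) : ℚ] = 2ⁿ). -/

import Mathlib

open Polynomial IntermediateField

private lemma aux_coprime (n : ℕ) : Nat.Coprime (2 ^ (n + 1) + 3) (3 * 2 ^ (n + 2)) := by
  have h3 : ¬ (3 ∣ 2 ^ (n + 1) + 3) := by
    intro h
    have h' : (3 : ℕ) ∣ 2 ^ (n + 1) := by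
      have := Nat.dvd_sub h (dvd_refl 3)
      simpa using this
    have := Nat.Prime.dvd_of_dvd_pow (p := 3) (by norm_num) h'
    omega
  have h2 : ¬ (2 ∣ 2 ^ (n + 1) + 3) := by
    obtain ⟨c, hc⟩ := dvd_pow_self 2 (Nat.succ_ne_zero n)
    omega
  exact Nat.Coprime.mul_right
    (((Nat.Prime.coprime_iff_not_dvd (by norm_num)).mpr h3).symm)
    (Nat.Coprime.pow_right _ ((Nat.Prime.coprime_iff_not_dvd Nat.prime_two).mpr h2).symm)

private lemma aux_totient (n : ℕ) : Nat.totient (3 * 2 ^ (n + 2)) = 2 ^ (n + 2) := by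
  rw [Nat.totient_mul (Nat.Coprime.pow_right _ (by norm_num)),
    Nat.totient_prime (by norm_num), Nat.totient_prime_pow Nat.prime_two (by omega)]
  have h : n + 2 - 1 = n + 1 := by omega
  rw [h]
  ring

set_option maxHeartbeats 2000000 in
set_option synthInstance.maxHeartbeats 400000 in
/-- The real algebraic number `2·cos(π/3 + π/2ⁿ)` has degree `2ⁿ` over `ℚ`:
its minimal polynomial over `ℚ` has degree `2ⁿ`. -/
theorem degree_two_cos_pi_third_add (n : ℕ) :
    (minpoly ℚ (2 * Real.cos (Real.pi / 3 + Real.pi / 2 ^ n))).natDegree = 2 ^ n := by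
  obtain _ | n := n
  · -- n = 0 : the number is -1
    have hval : 2 * Real.cos (Real.pi / 3 + Real.pi / 2 ^ 0) = -1 := by
      rw [pow_zero, div_one, Real.cos_add_pi, Real.cos_pi_div_three]; norm_num
    rw [hval]
    have : (-1 : ℝ) = algebraMap ℚ ℝ (-1) := by norm_num
    rw [this, minpoly.eq_X_sub_C, natDegree_X_sub_C, pow_zero]
  · -- main case
    set θ : ℝ := Real.pi / 3 + Real.pi / 2 ^ (n + 1) with hθ
    set m : ℕ := 3 * 2 ^ (n + 2) with hm
    set k : ℕ := 2 ^ (n + 1) + 3 with hk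
    have hmpos : 0 < m := by rw [hm]; positivity
    have hm0 : (m : ℝ) ≠ 0 := by
      simp only [ne_eq, Nat.cast_eq_zero]
      omega
    set ζ : ℂ := Complex.exp (θ * Complex.I) with hζdef
    have hζ : IsPrimitiveRoot ζ m := by
      have h0 := (Complex.isPrimitiveRoot_exp m (by omega)).pow_of_coprime k
        (aux_coprime n)
      have : Complex.exp (2 * Real.pi * Complex.I / m) ^ k = ζ := by
        rw [← Complex.exp_nat_mul]
        congr 1
        have hr : (k : ℝ) * (2 * Real.pi / m) = θ := by
          rw [hθ, hk, hm]
          field_simp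
          push_cast
          ring
        calc (k : ℂ) * (2 * Real.pi * Complex.I / m)
            = ((k : ℝ) * (2 * Real.pi / m) : ℝ) * Complex.I := by push_cast; ring
          _ = (θ : ℂ) * Complex.I := by rw [hr]
      rwa [this] at h0
    have hζ0 : ζ ≠ 0 := Complex.exp_ne_zero _
    have hζint : IsIntegral ℚ ζ := (hζ.isIntegral hmpos).tower_top
    have hζinv : ζ⁻¹ = ζ ^ (m - 1) := by
      have h1 : ζ * ζ ^ (m - 1) = 1 := by
        rw [← pow_succ', Nat.sub_add_cancel (by omega)]
        exact hζ.pow_eq_one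
      field_simp
      rw [← h1]
    set x : ℝ := 2 * Real.cos θ with hx
    have hXζ : ((x : ℝ) : ℂ) = ζ + ζ⁻¹ := by
      rw [hx, hζdef, ← Complex.exp_neg]
      push_cast
      rw [Complex.two_cos]
      ring
    have hXint : IsIntegral ℚ ((x : ℝ) : ℂ) := by
      rw [hXζ, hζinv]
      exact hζint.add (hζint.pow _)
    -- F is contained in the reals inside ℂ
    have hFreal : ∀ z ∈ ℚ⟮((x : ℝ) : ℂ)⟯, ∃ r : ℝ, (r : ℂ) = z := by
      have hsub : ℚ⟮((x : ℝ) : ℂ)⟯ ≤ Subfield.toIntermediateField (K := ℚ)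
          Complex.ofRealHom.fieldRange
          (fun q => ⟨(q : ℝ), by
            rw [Complex.ofRealHom_eq_coe, eq_ratCast (algebraMap ℚ ℂ) q]
            norm_cast⟩) := by
        apply IntermediateField.adjoin_le_iff.mpr
        intro z hz
        rcases hz with rfl
        exact ⟨x, rfl⟩
      intro z hz
      exact hsub hz
    have hζnotF : ζ ∉ ℚ⟮((x : ℝ) : ℂ)⟯ := by
      intro h
      obtain ⟨r, hr⟩ := hFreal ζ h
      have him : ζ.im = Real.sin θ := by
        rw [hζdef]; exact Complex.exp_ofReal_mul_I_im θ
      have hsin : 0 < Real.sin θ := by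
        apply Real.sin_pos_of_pos_of_lt_pi
        · rw [hθ]; positivity
        · rw [hθ]
          have h1 : Real.pi / 2 ^ (n + 1) ≤ Real.pi / 2 := by
            apply div_le_div_of_nonneg_left Real.pi_pos.le (by norm_num)
            have : (2 : ℝ) ≤ 2 ^ (n + 1) := by
              calc (2 : ℝ) = 2 ^ 1 := by norm_num
                _ ≤ 2 ^ (n + 1) := by
                  apply pow_le_pow_right₀ (by norm_num) (by omega)
            linarith
          nlinarith [Real.pi_pos]
      rw [← hr] at him
      simp at him
      rw [← him] at hsin
      exact lt_irrefl _ hsin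
    -- the quadratic over F killed by ζ
    set gen : ℚ⟮((x : ℝ) : ℂ)⟯ := IntermediateField.AdjoinSimple.gen ℚ ((x : ℝ) : ℂ) with hgen
    set p : Polynomial ℚ⟮((x : ℝ) : ℂ)⟯ := X ^ 2 + (C (-gen) * X + C 1) with hp
    have hpmonic : p.Monic := by
      rw [hp]
      exact Polynomial.monic_X_pow_add (n := 2)
        (lt_of_le_of_lt degree_linear_le (by norm_num))
    have hpdeg : p.natDegree = 2 := by
      have hdeg : p.degree = 2 := by
        rw [hp]
        have h1 : (C (-gen) * X + C 1).degree
            < (X ^ 2 : Polynomial ℚ⟮((x : ℝ) : ℂ)⟯).degree := by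
          rw [Polynomial.degree_X_pow]
          exact lt_of_le_of_lt degree_linear_le (by norm_num)
        rw [Polynomial.degree_add_eq_left_of_degree_lt h1, Polynomial.degree_X_pow]
        norm_num
      exact Polynomial.natDegree_eq_of_degree_eq_some hdeg
    have haev : Polynomial.aeval ζ p = 0 := by
      rw [hp]
      simp only [map_add, map_mul, map_pow, Polynomial.aeval_X, Polynomial.aeval_C, map_neg,
        map_one]
      have hGen : (algebraMap ℚ⟮((x : ℝ) : ℂ)⟯ ℂ) gen = ((x : ℝ) : ℂ) :=
        IntermediateField.AdjoinSimple.algebraMap_gen ℚ _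
      rw [hGen, hXζ]
      field_simp
      ring
    have hζintF : IsIntegral ℚ⟮((x : ℝ) : ℂ)⟯ ζ := ⟨p, hpmonic, by rwa [← Polynomial.aeval_def]⟩
    have hdeg2 : (minpoly ℚ⟮((x : ℝ) : ℂ)⟯ ζ).natDegree = 2 := by
      apply le_antisymm
      · have := Polynomial.natDegree_le_of_dvd (minpoly.dvd _ ζ haev) hpmonic.ne_zero
        omega
      · rw [minpoly.two_le_natDegree_iff hζintF]
        rintro ⟨⟨y, hy⟩, rfl⟩
        exact hζnotF hy
    -- tower computation
    haveI : FiniteDimensional ℚ ℚ⟮((x : ℝ) : ℂ)⟯ :=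
      IntermediateField.adjoin.finiteDimensional hXint
    haveI : FiniteDimensional ℚ⟮((x : ℝ) : ℂ)⟯ ℚ⟮((x : ℝ) : ℂ)⟯⟮ζ⟯ :=
      IntermediateField.adjoin.finiteDimensional hζintF
    have hfr2 : Module.finrank ℚ⟮((x : ℝ) : ℂ)⟯ ℚ⟮((x : ℝ) : ℂ)⟯⟮ζ⟯ = 2 := by
      rw [IntermediateField.adjoin.finrank hζintF, hdeg2]
    have htop : Module.finrank ℚ ℚ⟮((x : ℝ) : ℂ)⟯ *
          Module.finrank ℚ⟮((x : ℝ) : ℂ)⟯ ℚ⟮((x : ℝ) : ℂ)⟯⟮ζ⟯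
        = Module.finrank ℚ (ℚ⟮((x : ℝ) : ℂ)⟯⟮ζ⟯.restrictScalars ℚ) :=
      Module.finrank_mul_finrank ℚ ℚ⟮((x : ℝ) : ℂ)⟯ ℚ⟮((x : ℝ) : ℂ)⟯⟮ζ⟯
    have hEq : ℚ⟮((x : ℝ) : ℂ)⟯⟮ζ⟯.restrictScalars ℚ = ℚ⟮ζ⟯ := by
      erw [IntermediateField.adjoin_simple_adjoin_simple]
      apply le_antisymm
      · apply IntermediateField.adjoin_le_iff.mpr
        rintro z (rfl | rfl)
        · rw [hXζ]
          exact add_mem (IntermediateField.mem_adjoin_simple_self ℚ ζ)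
            (inv_mem (IntermediateField.mem_adjoin_simple_self ℚ ζ))
        · exact IntermediateField.mem_adjoin_simple_self ℚ ζ
      · exact IntermediateField.adjoin.mono _ _ _ (by intro z hz; simp_all)
    have hfrζ : Module.finrank ℚ ℚ⟮ζ⟯ = 2 ^ (n + 2) := by
      rw [IntermediateField.adjoin.finrank hζint,
        ← Polynomial.cyclotomic_eq_minpoly_rat hζ (by positivity),
        Polynomial.natDegree_cyclotomic, aux_totient]
    have hfrF : Module.finrank ℚ ℚ⟮((x : ℝ) : ℂ)⟯ = (minpoly ℚ ((x : ℝ) : ℂ)).natDegree :=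
      IntermediateField.adjoin.finrank hXint
    have hminR : minpoly ℚ ((x : ℝ) : ℂ) = minpoly ℚ x := by
      have : ((x : ℝ) : ℂ) = algebraMap ℝ ℂ x := rfl
      rw [this, minpoly.algebraMap_eq Complex.ofReal_injective]
    have key : (minpoly ℚ x).natDegree * 2 = 2 ^ (n + 2) := by
      rw [← hminR, ← hfrF, ← hfrζ, ← hEq, ← htop, hfr2]
    have h2 : (2 : ℕ) ^ (n + 2) = 2 ^ (n + 1) * 2 := by ring
    omega
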